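/- Fix q ∈ (0,1), ε > 0, K ∈ ℕ, and vectors u, v ∈ ℝ_+^K. If Σ_{k=1}^K (v_k + ε)/(u_k + ε)^{1-q} ≤ Σ_{k=1}^K (u_k + ε)/(u_k + ε)^{1-q}, then Σ_{k=1}^K (v_k + ε)^q ≤ Σ_{k=1}^K (u_k + ε)^q. (This is the key inequality showing the iteratively reweighted linear programming scheme decreases the objective Σ_k (x̃_k + ε)^q.) -/

import Mathlib

theorem irwlp_decreases_objective
    (K : ℕ) (q : ℝ) (hq : 0 < q) (hq1 : q < 1)
    (ε : ℝ) (hε : 0 < ε)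
    (u v : Fin K → ℝ) (hu : ∀ k, 0 ≤ u k) (hv : ∀ k, 0 ≤ v k)
    (h : ∑ k, (v k + ε) / (u k + ε) ^ (1 - q) ≤
         ∑ k, (u k + ε) / (u k + ε) ^ (1 - q)) :
    ∑ k, (v k + ε) ^ q ≤ ∑ k, (u k + ε) ^ q := by
  rcases Nat.eq_zero_or_pos K with hK | hK
  · subst hK; simp
  have h1q : (0:ℝ) < 1 - q := by linarith
  have hup : ∀ k, 0 < u k + ε := fun k => by have := hu k; linarith
  have hvp : ∀ k, 0 < v k + ε := fun k => by have := hv k; linarith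
  set f : Fin K → ℝ := fun k => ((v k + ε) / (u k + ε) ^ (1 - q)) ^ q with hf
  set g : Fin K → ℝ := fun k => (u k + ε) ^ (q * (1 - q)) with hg
  have hfn : ∀ k, 0 ≤ (v k + ε) / (u k + ε) ^ (1 - q) :=
    fun k => div_nonneg (hvp k).le (Real.rpow_nonneg (hup k).le _)
  have hpq : Real.HolderConjugate (1/q) (1/(1-q)) := by
    rw [Real.holderConjugate_iff]
    constructor
    · rw [lt_div_iff₀ hq]; linarith
    · rw [one_div, one_div, inv_inv, inv_inv]; ring
  have key := Real.inner_le_Lp_mul_Lq_of_nonneg (s := Finset.univ) hpq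
    (f := f) (g := g)
    (fun k _ => Real.rpow_nonneg (hfn k) _)
    (fun k _ => Real.rpow_nonneg (hup k).le _)
  have hfg : ∀ k, f k * g k = (v k + ε) ^ q := by
    intro k
    simp only [hf, hg]
    rw [Real.div_rpow (hvp k).le (Real.rpow_nonneg (hup k).le _),
      ← Real.rpow_mul (hup k).le, show (1-q)*q = q*(1-q) from mul_comm _ _,
      div_mul_cancel₀]
    exact (Real.rpow_pos_of_pos (hup k) _).ne'
  have hfp : ∀ k, f k ^ (1/q) = (v k + ε) / (u k + ε) ^ (1 - q) := by
    intro k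
    simp only [hf]
    rw [← Real.rpow_mul (hfn k), mul_one_div_cancel hq.ne', Real.rpow_one]
  have hgp : ∀ k, g k ^ (1/(1-q)) = (u k + ε) ^ q := by
    intro k
    simp only [hg]
    rw [← Real.rpow_mul (hup k).le]
    congr 1
    field_simp
  have huu : ∀ k, (u k + ε) / (u k + ε) ^ (1 - q) = (u k + ε) ^ q := by
    intro k
    calc (u k + ε) / (u k + ε) ^ (1 - q)
        = (u k + ε) ^ (1:ℝ) / (u k + ε) ^ (1 - q) := by rw [Real.rpow_one]
      _ = (u k + ε) ^ ((1:ℝ) - (1 - q)) := (Real.rpow_sub (hup k) _ _).symm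
      _ = (u k + ε) ^ q := by ring_nf
  simp only [hfg, hfp, hgp, one_div_one_div] at key
  rw [Finset.sum_congr rfl (fun k _ => huu k)] at h
  set B : ℝ := ∑ k, (u k + ε) ^ q with hB
  have hBpos : 0 < B := Finset.sum_pos (fun k _ => Real.rpow_pos_of_pos (hup k) _)
    (Finset.univ_nonempty_iff.2 ⟨⟨0, hK⟩⟩)
  have hAnn : 0 ≤ ∑ k, (v k + ε) / (u k + ε) ^ (1 - q) :=
    Finset.sum_nonneg fun k _ => hfn k
  calc ∑ k, (v k + ε) ^ q
      ≤ (∑ k, (v k + ε) / (u k + ε) ^ (1 - q)) ^ q * B ^ (1-q) := key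
    _ ≤ B ^ q * B ^ (1-q) := by
        gcongr
    _ = B := by rw [← Real.rpow_add hBpos]; simp
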